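/- Let ℓ ≥ 1 and let u be a finite mass solution of the coagulation-with-emission equations on [0,T] with large initial conditions, i.e. u_i(0) = 0 for every i ≤ ℓ. Then u_i(t) = 0 for every i ≤ ℓ and every t ∈ [0,T] (no spontaneous generation of small clusters). -/

import Mathlib

open Finset Filter Topology

noncomputable section

/-- Total reaction probability mass
`M(t) = ∑_{m,n ≥ 1, m+n ≥ ℓ+1} m n u_m(t) u_n(t)`. -/
def Mfun (ℓ : ℕ) (u : ℕ → ℝ → ℝ) (t : ℝ) : ℝ :=
  ∑' p : ℕ × ℕ,
    if 1 ≤ p.1 ∧ 1 ≤ p.2 ∧ ℓ + 1 ≤ p.1 + p.2 then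
      (p.1 : ℝ) * (p.2 : ℝ) * u p.1 t * u p.2 t
    else 0

/-- Right-hand side of the coagulation-with-emission equation for `u n`:
`(1/M)[∑_{i=1}^{n+ℓ−1} i(n+ℓ−i) u_i u_{n+ℓ−i} − 2 n u_n ∑_{i ≥ max(1, ℓ−n+1)} i u_i]`. -/
def coagRHS (ℓ : ℕ) (u : ℕ → ℝ → ℝ) (n : ℕ) (t : ℝ) : ℝ :=
  (1 / Mfun ℓ u t) *
    ((∑ i ∈ Finset.Icc 1 (n + ℓ - 1),
        (i : ℝ) * ((n + ℓ - i : ℕ) : ℝ) * u i t * u (n + ℓ - i) t)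
      - 2 * (n : ℝ) * u n t *
          (∑' i : ℕ, if max 1 (ℓ + 1 - n) ≤ i then (i : ℝ) * u i t else 0))

/-- `u` is a (C¹) solution of the coagulation-with-emission equations on `[0,T]`,
with `M > 0` on `[0,T]` and nonnegative initial data summing to `1`. -/
structure IsCoagSolution (ℓ : ℕ) (T : ℝ) (u : ℕ → ℝ → ℝ) : Prop where
  contDiff : ∀ n, 1 ≤ n → ContDiffOn ℝ 1 (u n) (Set.Icc 0 T)
  Msummable : ∀ t ∈ Set.Icc (0 : ℝ) T,
    Summable (fun p : ℕ × ℕ =>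
      if 1 ≤ p.1 ∧ 1 ≤ p.2 ∧ ℓ + 1 ≤ p.1 + p.2 then
        (p.1 : ℝ) * (p.2 : ℝ) * u p.1 t * u p.2 t
      else 0)
  Mpos : ∀ t ∈ Set.Icc (0 : ℝ) T, 0 < Mfun ℓ u t
  ode : ∀ n, 1 ≤ n → ∀ t ∈ Set.Icc (0 : ℝ) T,
    HasDerivWithinAt (u n) (coagRHS ℓ u n t) (Set.Icc 0 T) t
  init_nonneg : ∀ n, 1 ≤ n → 0 ≤ u n 0
  init_sum : HasSum (fun i : ℕ => if 1 ≤ i then u i 0 else 0) 1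

/-- A finite mass solution: a nonnegative solution whose first-moment series
`m₁(t) = ∑_{i ≥ 1} i u_i(t)` converges uniformly on `[0,T]`. -/
structure IsFiniteMassSolution (ℓ : ℕ) (T : ℝ) (u : ℕ → ℝ → ℝ)
    extends IsCoagSolution ℓ T u : Prop where
  nonneg : ∀ n, 1 ≤ n → ∀ t ∈ Set.Icc (0 : ℝ) T, 0 ≤ u n t
  m1_unif : TendstoUniformlyOn
    (fun N t => ∑ i ∈ Finset.range N, (i : ℝ) * u i t)
    (fun t => ∑' i : ℕ, (i : ℝ) * u i t) atTop (Set.Icc 0 T)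

/-- no spontaneous generation of small clusters. For `ℓ ≥ 1` and a
finite mass solution on `[0,T]` with large initial conditions (`u_i(0) = 0` for
`1 ≤ i ≤ ℓ`), one has `u_i(t) = 0` for all `1 ≤ i ≤ ℓ` and `t ∈ [0,T]`. -/
theorem no_spontaneous_generation_small (ℓ : ℕ) (hℓ : 1 ≤ ℓ) (T : ℝ) (hT : 0 < T)
    (u : ℕ → ℝ → ℝ) (hu : IsFiniteMassSolution ℓ T u)
    (hlarge : ∀ i, 1 ≤ i → i ≤ ℓ → u i 0 = 0) :
    ∀ i, 1 ≤ i → i ≤ ℓ → ∀ t ∈ Set.Icc (0 : ℝ) T, u i t = 0 := by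
  have h0I : (0 : ℝ) ∈ Set.Icc (0 : ℝ) T := ⟨le_refl _, hT.le⟩
  have hcompact : IsCompact (Set.Icc (0 : ℝ) T) := isCompact_Icc
  have hne : (Set.Icc (0 : ℝ) T).Nonempty := ⟨0, h0I⟩
  have hcont : ∀ n, 1 ≤ n → ContinuousOn (u n) (Set.Icc 0 T) :=
    fun n hn => (hu.contDiff n hn).continuousOn
  -- nonnegativity of terms i * u i s
  have hg_nonneg : ∀ s ∈ Set.Icc (0 : ℝ) T, ∀ j : ℕ, 0 ≤ (j : ℝ) * u j s := by
    intro s hs j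
    rcases Nat.eq_zero_or_pos j with rfl | hj
    · simp
    · exact mul_nonneg (by positivity) (hu.nonneg j hj s hs)
  -- summability of the first moment
  have hm1sum : ∀ s ∈ Set.Icc (0 : ℝ) T, Summable (fun j : ℕ => (j : ℝ) * u j s) := by
    intro s hs
    have htend := hu.m1_unif.tendsto_at hs
    have hmono : Monotone (fun N => ∑ i ∈ Finset.range N, (i : ℝ) * u i s) := by
      intro N M h
      exact Finset.sum_le_sum_of_subset_of_nonneg (Finset.range_mono h)
        (fun j _ _ => hg_nonneg s hs j)
    exact summable_of_sum_range_le (fun j => hg_nonneg s hs j)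
      (fun n => hmono.ge_of_tendsto htend n)
  -- continuity of the first moment
  have hm1cont : ContinuousOn (fun s => ∑' j : ℕ, (j : ℝ) * u j s) (Set.Icc 0 T) := by
    apply hu.m1_unif.continuousOn
    apply Filter.Eventually.frequently
    filter_upwards with N
    apply continuousOn_finset_sum
    intro j _
    rcases Nat.eq_zero_or_pos j with rfl | hj
    · simp only [Nat.cast_zero, zero_mul]
      exact continuousOn_const
    · exact continuousOn_const.mul (hcont j hj)
  -- bound on u j for 1 ≤ j ≤ 2ℓ
  obtain ⟨B, hB0, hB⟩ : ∃ B : ℝ, 0 ≤ B ∧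
      ∀ j, 1 ≤ j → j ≤ 2 * ℓ → ∀ s ∈ Set.Icc (0 : ℝ) T, u j s ≤ B := by
    have hc : ContinuousOn (fun s => ∑ j ∈ Finset.Icc 1 (2 * ℓ), u j s) (Set.Icc 0 T) := by
      apply continuousOn_finset_sum
      intro j hj
      exact hcont j (Finset.mem_Icc.1 hj).1
    obtain ⟨x, hxI, hx⟩ := hcompact.exists_isMaxOn hne hc
    refine ⟨max 0 (∑ j ∈ Finset.Icc 1 (2 * ℓ), u j x), le_max_left _ _, ?_⟩
    intro j hj1 hj2 s hs
    calc u j s ≤ ∑ k ∈ Finset.Icc 1 (2 * ℓ), u k s :=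
          Finset.single_le_sum (fun k hk => hu.nonneg k (Finset.mem_Icc.1 hk).1 s hs)
            (Finset.mem_Icc.2 ⟨hj1, hj2⟩)
      _ ≤ ∑ j ∈ Finset.Icc 1 (2 * ℓ), u j x := hx hs
      _ ≤ _ := le_max_right _ _
  -- identity for Mfun and continuity
  set S : Finset (ℕ × ℕ) :=
    (Finset.Icc 1 ℓ ×ˢ Finset.Icc 1 ℓ).filter (fun p => p.1 + p.2 ≤ ℓ) with hS
  set low : ℝ → ℝ := fun s =>
    ∑ p ∈ S, (p.1 : ℝ) * (p.2 : ℝ) * u p.1 s * u p.2 s with hlow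
  have hM_eq : ∀ s ∈ Set.Icc (0 : ℝ) T,
      Mfun ℓ u s = (∑' j : ℕ, (j : ℝ) * u j s) * (∑' j : ℕ, (j : ℝ) * u j s) - low s := by
    intro s hs
    set g : ℕ → ℝ := fun j => (j : ℝ) * u j s with hgdef
    set mterm : ℕ × ℕ → ℝ := fun p =>
      if 1 ≤ p.1 ∧ 1 ≤ p.2 ∧ ℓ + 1 ≤ p.1 + p.2 then
        (p.1 : ℝ) * (p.2 : ℝ) * u p.1 s * u p.2 s else 0 with hmterm
    set lowterm : ℕ × ℕ → ℝ := fun p =>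
      if p ∈ S then (p.1 : ℝ) * (p.2 : ℝ) * u p.1 s * u p.2 s else 0 with hlowterm
    have hsplit : ∀ p : ℕ × ℕ, g p.1 * g p.2 = mterm p + lowterm p := by
      rintro ⟨m, n⟩
      simp only [hgdef, hmterm, hlowterm, hS, Finset.mem_filter, Finset.mem_product,
        Finset.mem_Icc]
      rcases Nat.eq_zero_or_pos m with rfl | hm
      · simp
      rcases Nat.eq_zero_or_pos n with rfl | hn
      · simp
      by_cases hmn : ℓ + 1 ≤ m + n
      · rw [if_pos ⟨hm, hn, hmn⟩, if_neg (by omega)]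
        ring
      · rw [if_neg (by omega), if_pos (by omega)]
        ring
    have hlowsum : Summable lowterm :=
      summable_of_ne_finset_zero (s := S) (fun p hp => by simp [hlowterm, hp])
    have hmsum : Summable mterm := hu.Msummable s hs
    have hfsum : Summable (fun p : ℕ × ℕ => g p.1 * g p.2) := by
      have := hmsum.add hlowsum
      exact this.congr (fun p => (hsplit p).symm)
    have hgsum : HasSum g (∑' j, g j) := (hm1sum s hs).hasSum
    have hprod : (∑' j, g j) * (∑' j, g j) = ∑' p : ℕ × ℕ, g p.1 * g p.2 :=
      hgsum.mul_eq hgsum hfsum.hasSum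
    have htsum_split : (∑' p : ℕ × ℕ, g p.1 * g p.2)
        = (∑' p, mterm p) + ∑' p, lowterm p := by
      rw [← hmsum.tsum_add hlowsum]
      exact tsum_congr hsplit
    have hlowval : (∑' p, lowterm p) = low s := by
      rw [tsum_eq_sum (s := S) (fun p hp => by simp [hlowterm, hp])]
      exact Finset.sum_congr rfl (fun p hp => by simp [hlowterm, hp])
    have : Mfun ℓ u s = ∑' p, mterm p := rfl
    rw [this, hprod, htsum_split, hlowval]
    ring
  have hMcont : ContinuousOn (Mfun ℓ u) (Set.Icc 0 T) := by
    have hlowcont : ContinuousOn low (Set.Icc 0 T) := by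
      apply continuousOn_finset_sum
      intro p hp
      simp only [hS, Finset.mem_filter, Finset.mem_product, Finset.mem_Icc] at hp
      exact ((continuousOn_const.mul (hcont p.1 hp.1.1.1)).mul (hcont p.2 hp.1.2.1))
    exact ContinuousOn.congr ((hm1cont.mul hm1cont).sub hlowcont)
      (fun s hs => hM_eq s hs)
  -- lower bound δ for Mfun
  obtain ⟨x0, hx0I, hminM⟩ := hcompact.exists_isMinOn hne hMcont
  set δ : ℝ := Mfun ℓ u x0 with hδdef
  have hδpos : 0 < δ := hu.Mpos x0 hx0I
  have hδle : ∀ s ∈ Set.Icc (0 : ℝ) T, δ ≤ Mfun ℓ u s := fun s hs => hminM hs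
  -- F and its properties
  set F : ℝ → ℝ := fun s => ∑ n ∈ Finset.Icc 1 ℓ, u n s with hF
  have hFnonneg : ∀ s ∈ Set.Icc (0 : ℝ) T, 0 ≤ F s := fun s hs =>
    Finset.sum_nonneg (fun n hn => hu.nonneg n (Finset.mem_Icc.1 hn).1 s hs)
  have hFle : ∀ n, 1 ≤ n → n ≤ ℓ → ∀ s ∈ Set.Icc (0 : ℝ) T, u n s ≤ F s := by
    intro n hn1 hn2 s hs
    exact Finset.single_le_sum (fun k hk => hu.nonneg k (Finset.mem_Icc.1 hk).1 s hs)
      (Finset.mem_Icc.2 ⟨hn1, hn2⟩)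
  have hFcont : ContinuousOn F (Set.Icc 0 T) :=
    continuousOn_finset_sum _ (fun n hn => hcont n (Finset.mem_Icc.1 hn).1)
  have hF0 : F 0 = 0 :=
    Finset.sum_eq_zero (fun n hn =>
      hlarge n (Finset.mem_Icc.1 hn).1 (Finset.mem_Icc.1 hn).2)
  have hFderiv : ∀ s ∈ Set.Icc (0 : ℝ) T,
      HasDerivWithinAt F (∑ n ∈ Finset.Icc 1 ℓ, coagRHS ℓ u n s) (Set.Icc 0 T) s := by
    intro s hs
    exact HasDerivWithinAt.fun_sum (fun n hn => hu.ode n (Finset.mem_Icc.1 hn).1 s hs)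
  -- key Gronwall-type bound
  set K : ℝ := (1 / δ) * (8 * (ℓ : ℝ) ^ 4 * B) with hK
  have hK0 : 0 ≤ K := by positivity
  have hkey : ∀ s ∈ Set.Icc (0 : ℝ) T,
      (∑ n ∈ Finset.Icc 1 ℓ, coagRHS ℓ u n s) ≤ K * F s := by
    intro s hs
    have hFs : 0 ≤ F s := hFnonneg s hs
    set c : ℝ := ((2 * ℓ : ℝ) * F s) * ((2 * ℓ : ℝ) * B) with hc
    have hc0 : 0 ≤ c := by positivity
    have hn_bound : ∀ n ∈ Finset.Icc 1 ℓ,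
        coagRHS ℓ u n s ≤ (1 / δ) * ((2 * ℓ : ℝ) * c) := by
      intro n hn
      obtain ⟨hn1, hn2⟩ := Finset.mem_Icc.1 hn
      -- loss term is nonnegative
      have hSn : 0 ≤ ∑' i : ℕ, if max 1 (ℓ + 1 - n) ≤ i then (i : ℝ) * u i s else 0 := by
        apply tsum_nonneg
        intro i
        split
        · exact hg_nonneg s hs i
        · exact le_refl 0
      have hloss : 0 ≤ 2 * (n : ℝ) * u n s *
          (∑' i : ℕ, if max 1 (ℓ + 1 - n) ≤ i then (i : ℝ) * u i s else 0) := by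
        apply mul_nonneg _ hSn
        have := hu.nonneg n hn1 s hs
        positivity
      -- gain term bounds
      have hterm : ∀ i ∈ Finset.Icc 1 (n + ℓ - 1),
          (i : ℝ) * ((n + ℓ - i : ℕ) : ℝ) * u i s * u (n + ℓ - i) s ≤ c := by
        intro i hi
        obtain ⟨hi1, hi2⟩ := Finset.mem_Icc.1 hi
        set j := n + ℓ - i with hj
        have hj1 : 1 ≤ j := by omega
        have hj2 : j ≤ 2 * ℓ := by omega
        have hi2' : i ≤ 2 * ℓ := by omega
        have hui : 0 ≤ u i s := hu.nonneg i hi1 s hs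
        have huj : 0 ≤ u j s := hu.nonneg j hj1 s hs
        have hicast : (i : ℝ) ≤ (2 * ℓ : ℝ) := by exact_mod_cast hi2'
        have hjcast : (j : ℝ) ≤ (2 * ℓ : ℝ) := by exact_mod_cast hj2
        have h2l : (0 : ℝ) ≤ 2 * ℓ := by positivity
        by_cases hcase : i ≤ ℓ
        · have h1 : (i : ℝ) * u i s ≤ (2 * ℓ : ℝ) * F s :=
            mul_le_mul hicast (hFle i hi1 hcase s hs) hui h2l
          have h2 : (j : ℝ) * u j s ≤ (2 * ℓ : ℝ) * B :=
            mul_le_mul hjcast (hB j hj1 hj2 s hs) huj h2l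
          calc (i : ℝ) * (j : ℝ) * u i s * u j s = ((i : ℝ) * u i s) * ((j : ℝ) * u j s) := by
                ring
            _ ≤ ((2 * ℓ : ℝ) * F s) * ((2 * ℓ : ℝ) * B) :=
                mul_le_mul h1 h2 (mul_nonneg (by positivity) huj) (by positivity)
            _ = c := rfl
        · have hjℓ : j ≤ ℓ := by omega
          have h1 : (i : ℝ) * u i s ≤ (2 * ℓ : ℝ) * B :=
            mul_le_mul hicast (hB i hi1 hi2' s hs) hui h2l
          have h2 : (j : ℝ) * u j s ≤ (2 * ℓ : ℝ) * F s :=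
            mul_le_mul hjcast (hFle j hj1 hjℓ s hs) huj h2l
          calc (i : ℝ) * (j : ℝ) * u i s * u j s = ((j : ℝ) * u j s) * ((i : ℝ) * u i s) := by
                ring
            _ ≤ ((2 * ℓ : ℝ) * F s) * ((2 * ℓ : ℝ) * B) :=
                mul_le_mul h2 h1 (mul_nonneg (by positivity) hui) (by positivity)
            _ = c := rfl
      have hGn_nonneg : 0 ≤ ∑ i ∈ Finset.Icc 1 (n + ℓ - 1),
          (i : ℝ) * ((n + ℓ - i : ℕ) : ℝ) * u i s * u (n + ℓ - i) s := by
        apply Finset.sum_nonneg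
        intro i hi
        obtain ⟨hi1, hi2⟩ := Finset.mem_Icc.1 hi
        have hui := hu.nonneg i hi1 s hs
        have huj := hu.nonneg (n + ℓ - i) (by omega) s hs
        positivity
      have hGn_le : (∑ i ∈ Finset.Icc 1 (n + ℓ - 1),
          (i : ℝ) * ((n + ℓ - i : ℕ) : ℝ) * u i s * u (n + ℓ - i) s)
            ≤ (2 * ℓ : ℝ) * c := by
        calc (∑ i ∈ Finset.Icc 1 (n + ℓ - 1),
            (i : ℝ) * ((n + ℓ - i : ℕ) : ℝ) * u i s * u (n + ℓ - i) s)
            ≤ (Finset.Icc 1 (n + ℓ - 1)).card • c := Finset.sum_le_card_nsmul _ _ _ hterm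
          _ = ((n + ℓ - 1 : ℕ) : ℝ) * c := by
              rw [Nat.card_Icc]; simp [nsmul_eq_mul]
          _ ≤ (2 * ℓ : ℝ) * c := by
              apply mul_le_mul_of_nonneg_right _ hc0
              have : (n + ℓ - 1 : ℕ) ≤ 2 * ℓ := by omega
              exact_mod_cast this
      -- assemble
      have hMs := hu.Mpos s hs
      have h1M : 0 ≤ 1 / Mfun ℓ u s := by positivity
      calc coagRHS ℓ u n s
          ≤ (1 / Mfun ℓ u s) * (∑ i ∈ Finset.Icc 1 (n + ℓ - 1),
              (i : ℝ) * ((n + ℓ - i : ℕ) : ℝ) * u i s * u (n + ℓ - i) s) := by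
            unfold coagRHS
            exact mul_le_mul_of_nonneg_left (sub_le_self _ hloss) h1M
        _ ≤ (1 / δ) * (∑ i ∈ Finset.Icc 1 (n + ℓ - 1),
              (i : ℝ) * ((n + ℓ - i : ℕ) : ℝ) * u i s * u (n + ℓ - i) s) :=
            mul_le_mul_of_nonneg_right
              (one_div_le_one_div_of_le hδpos (hδle s hs)) hGn_nonneg
        _ ≤ (1 / δ) * ((2 * ℓ : ℝ) * c) :=
            mul_le_mul_of_nonneg_left hGn_le (by positivity)
    calc (∑ n ∈ Finset.Icc 1 ℓ, coagRHS ℓ u n s)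
        ≤ (Finset.Icc 1 ℓ).card • ((1 / δ) * ((2 * ℓ : ℝ) * c)) :=
          Finset.sum_le_card_nsmul _ _ _ hn_bound
      _ = (ℓ : ℝ) * ((1 / δ) * ((2 * ℓ : ℝ) * c)) := by
          rw [Nat.card_Icc]; simp [nsmul_eq_mul]
      _ = K * F s := by rw [hK, hc]; ring
  -- Gronwall argument via G = F * exp(-K t)
  set G : ℝ → ℝ := fun s => F s * Real.exp (-K * s) with hG
  have hGderiv : ∀ s ∈ Set.Icc (0 : ℝ) T,
      HasDerivWithinAt G
        ((∑ n ∈ Finset.Icc 1 ℓ, coagRHS ℓ u n s) * Real.exp (-K * s)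
          + F s * (Real.exp (-K * s) * (-K))) (Set.Icc 0 T) s := by
    intro s hs
    have he : HasDerivAt (fun x : ℝ => Real.exp (-K * x)) (Real.exp (-K * s) * (-K)) s := by
      have : HasDerivAt (fun x : ℝ => -K * x) (-K) s := by
        simpa using (hasDerivAt_id s).const_mul (-K)
      exact this.exp
    exact (hFderiv s hs).mul (he.hasDerivWithinAt)
  have hGd_nonpos : ∀ s ∈ Set.Icc (0 : ℝ) T,
      (∑ n ∈ Finset.Icc 1 ℓ, coagRHS ℓ u n s) * Real.exp (-K * s)
        + F s * (Real.exp (-K * s) * (-K)) ≤ 0 := by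
    intro s hs
    have he : 0 < Real.exp (-K * s) := Real.exp_pos _
    have := hkey s hs
    nlinarith [this, he.le]
  have hGanti : AntitoneOn G (Set.Icc 0 T) := by
    apply antitoneOn_of_deriv_nonpos (convex_Icc 0 T)
    · exact hFcont.mul (Real.continuous_exp.comp (continuous_const.mul continuous_id)).continuousOn
    · intro x hx
      rw [interior_Icc] at hx
      have hxI : x ∈ Set.Icc (0 : ℝ) T := Set.mem_Icc_of_Ioo hx
      have := (hGderiv x hxI).hasDerivAt (Icc_mem_nhds hx.1 hx.2)
      exact this.differentiableAt.differentiableWithinAt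
    · intro x hx
      rw [interior_Icc] at hx
      have hxI : x ∈ Set.Icc (0 : ℝ) T := Set.mem_Icc_of_Ioo hx
      have hd := (hGderiv x hxI).hasDerivAt (Icc_mem_nhds hx.1 hx.2)
      rw [hd.deriv]
      exact hGd_nonpos x hxI
  -- conclude
  intro i hi1 hiℓ t ht
  have hGt : G t ≤ G 0 := hGanti h0I ht ht.1
  have hG0 : G 0 = 0 := by simp [hG, hF0]
  have hFt0 : F t = 0 := by
    have he : 0 < Real.exp (-K * t) := Real.exp_pos _
    have h1 : F t * Real.exp (-K * t) ≤ 0 := by rw [← hG0]; exact hGt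
    have h2 := hFnonneg t ht
    nlinarith
  have := (Finset.sum_eq_zero_iff_of_nonneg
    (fun n hn => hu.nonneg n (Finset.mem_Icc.1 hn).1 t ht)).1 hFt0
  exact this i (Finset.mem_Icc.2 ⟨hi1, hiℓ⟩)
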